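/- Every standard nonexpansive simple, properly ordered Bratteli-Vershik system has unbounded width: for every R there exists a level with more than R vertices. -/

import Mathlib

set_option autoImplicit false

/-- An ordered Bratteli diagram: finite nonempty vertex sets `V n`, a single root
vertex at level `0`, finite edge sets `E n` (edges from level `n` to level `n+1`,
multiple edges allowed), every vertex has an outgoing edge, every non-root vertex
an incoming edge, and the edges into each vertex carry a linear order, encoded by
the relation `elt` which relates only edges with the same target. -/
structure BDiagram where
  V : ℕ → Type
  E : ℕ → Type
  fintV : ∀ n, Fintype (V n)
  fintE : ∀ n, Fintype (E n)
  nonV : ∀ n, Nonempty (V n)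
  rootSubsingleton : Subsingleton (V 0)
  src : ∀ {n}, E n → V n
  tgt : ∀ {n}, E n → V (n + 1)
  hasOut : ∀ (n : ℕ) (v : V n), ∃ e : E n, src e = v
  hasIn : ∀ (n : ℕ) (v : V (n + 1)), ∃ e : E n, tgt e = v
  elt : ∀ {n}, E n → E n → Prop
  elt_tgt : ∀ (n : ℕ) (e f : E n), elt e f → tgt e = tgt f
  elt_irrefl : ∀ (n : ℕ) (e : E n), ¬ elt e e
  elt_trans : ∀ (n : ℕ) (e f g : E n), elt e f → elt f g → elt e g
  elt_total : ∀ (n : ℕ) (e f : E n), tgt e = tgt f → e ≠ f → elt e f ∨ elt f e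

namespace BDiagram

variable (B : BDiagram)

def castV {m n : ℕ} (h : m = n) (v : B.V m) : B.V n := h ▸ v

/-- An edge is minimal if no edge (into the same target) is below it. -/
def IsMinEdge {n : ℕ} (e : B.E n) : Prop := ∀ e' : B.E n, ¬ B.elt e' e

/-- An edge is maximal if no edge (into the same target) is above it. -/
def IsMaxEdge {n : ℕ} (e : B.E n) : Prop := ∀ e' : B.E n, ¬ B.elt e e'

/-- The space of infinite paths from the root. -/
def PathSpace : Type := { x : ∀ n, B.E n // ∀ n, B.tgt (x n) = B.src (x (n + 1)) }

def IsMinPath (x : B.PathSpace) : Prop := ∀ n, B.IsMinEdge (x.1 n)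

def IsMaxPath (x : B.PathSpace) : Prop := ∀ n, B.IsMaxEdge (x.1 n)

/-- Properly ordered: unique minimal and unique maximal path. -/
def ProperlyOrdered : Prop :=
  (∃! x : B.PathSpace, B.IsMinPath x) ∧ (∃! x : B.PathSpace, B.IsMaxPath x)

/-- The partial order on cofinal paths: `x < y` iff they eventually agree and at the
last disagreement the edge of `x` is below the edge of `y`. -/
def pathLT (x y : B.PathSpace) : Prop :=
  ∃ N : ℕ, B.elt (x.1 N) (y.1 N) ∧ ∀ n : ℕ, N < n → x.1 n = y.1 n

/-- `T` is the Vershik map: each non-maximal path goes to its successor, and each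
maximal path goes to a minimal path. -/
def IsVershik (T : B.PathSpace ≃ B.PathSpace) : Prop :=
  (∀ x : B.PathSpace, ¬ B.IsMaxPath x →
    B.pathLT x (T x) ∧ ∀ z : B.PathSpace, B.pathLT x z → ¬ B.pathLT z (T x)) ∧
  (∀ x : B.PathSpace, B.IsMaxPath x → B.IsMinPath (T x))

/-- `f` is a chain of consecutive edges on levels `[a, b)`. -/
def SegOn (f : ∀ i, B.E i) (a b : ℕ) : Prop :=
  ∀ i : ℕ, a ≤ i → i + 1 < b → B.tgt (f i) = B.src (f (i + 1))

/-- Simplicity: some telescoping has complete connections between adjacent levels. -/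
def Simple : Prop :=
  ∃ ns : ℕ → ℕ, StrictMono ns ∧ ns 0 = 0 ∧
    ∀ (l c : ℕ), ns (l + 1) = c + 1 →
      ∀ (v : B.V (ns l)) (w : B.V (c + 1)),
        ∃ f : ∀ i, B.E i, B.SegOn f (ns l) (c + 1) ∧ B.src (f (ns l)) = v ∧ B.tgt (f c) = w

/-- The natural (Cantor) topology on the path space, induced from the product of
the discrete topologies on the edge sets. -/
def pathTop : TopologicalSpace B.PathSpace :=
  TopologicalSpace.induced Subtype.val (@Pi.topologicalSpace ℕ B.E (fun _ => ⊥))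

/-- Integer iterates of a bijection of the path space. -/
def iterZ (T : B.PathSpace ≃ B.PathSpace) (m : ℤ) : B.PathSpace ≃ B.PathSpace :=
  (T : Equiv.Perm B.PathSpace) ^ m

/-- Two paths have the same `k`-coding: for every time `m` the initial segments of
`T^m x` and `T^m y` from the root to level `k` coincide. -/
def SameCoding (T : B.PathSpace ≃ B.PathSpace) (k : ℕ) (x y : B.PathSpace) : Prop :=
  ∀ (m : ℤ) (i : ℕ), i < k → ((B.iterZ T m) x).1 i = ((B.iterZ T m) y).1 i

/-- A depth `k` pair: distinct paths with the same `k`-coding but not the same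
`(k+1)`-coding. -/
def DepthPair (T : B.PathSpace ≃ B.PathSpace) (k : ℕ) (x y : B.PathSpace) : Prop :=
  x ≠ y ∧ B.SameCoding T k x y ∧ ¬ B.SameCoding T (k + 1) x y

/-- The pair `x, y` has a `j` cut: for some time `m`, both `T^m x` and `T^m y` are
minimal from the root into level `j`. -/
def HasCut (T : B.PathSpace ≃ B.PathSpace) (j : ℕ) (x y : B.PathSpace) : Prop :=
  ∃ m : ℤ, (∀ i : ℕ, i < j → B.IsMinEdge (((B.iterZ T m) x).1 i)) ∧
    (∀ i : ℕ, i < j → B.IsMinEdge (((B.iterZ T m) y).1 i))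

/-- Nonexpansive: for every `k ≥ 1` there are two distinct paths with the same
`k`-coding. -/
def Nonexpansive (T : B.PathSpace ≃ B.PathSpace) : Prop :=
  ∀ k : ℕ, 1 ≤ k → ∃ x y : B.PathSpace, x ≠ y ∧ B.SameCoding T k x y

/-- Well timed: for every `k ≥ 1` and every `j > k` there is a depth `k` pair with
a `j` cut. -/
def WellTimed (T : B.PathSpace ≃ B.PathSpace) : Prop :=
  ∀ k : ℕ, 1 ≤ k → ∀ j : ℕ, k < j →
    ∃ x y : B.PathSpace, B.DepthPair T k x y ∧ B.HasCut T j x y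

/-- Very well timed: for every `k ≥ 1` there is a depth `k` pair having a `j` cut
for every `j > k`. -/
def VeryWellTimed (T : B.PathSpace ≃ B.PathSpace) : Prop :=
  ∀ k : ℕ, 1 ≤ k →
    ∃ x y : B.PathSpace, B.DepthPair T k x y ∧ ∀ j : ℕ, k < j → B.HasCut T j x y

/-- Weakly well timed: for infinitely many `k ≥ 1`, for every `j > k` there is a
depth `k` pair with a `j` cut. -/
def WeaklyWellTimed (T : B.PathSpace ≃ B.PathSpace) : Prop :=
  ∀ K : ℕ, ∃ k : ℕ, K ≤ k ∧ 1 ≤ k ∧ ∀ j : ℕ, k < j →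
    ∃ x y : B.PathSpace, B.DepthPair T k x y ∧ B.HasCut T j x y

/-- Untimed: for every `k ≥ 1` there is a `j > k` such that no depth `k` pair has a
`j` cut. -/
def Untimed (T : B.PathSpace ≃ B.PathSpace) : Prop :=
  ∀ k : ℕ, 1 ≤ k → ∃ j : ℕ, k < j ∧
    ∀ x y : B.PathSpace, B.DepthPair T k x y → ¬ B.HasCut T j x y

/-- Very untimed: for every `k ≥ 1`, no depth `k` pair has a `(k+1)` cut. -/
def VeryUntimed (T : B.PathSpace ≃ B.PathSpace) : Prop :=
  ∀ k : ℕ, 1 ≤ k →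
    ∀ x y : B.PathSpace, B.DepthPair T k x y → ¬ B.HasCut T (k + 1) x y

/-- Finite paths from the root to level `n`. -/
def FinPath (n : ℕ) : Type :=
  { f : (i : Fin n) → B.E i.val //
    ∀ (i : ℕ) (h : i + 1 < n), B.tgt (f ⟨i, by omega⟩) = B.src (f ⟨i + 1, h⟩) }

/-- The lexicographic (from the end) order on finite paths to level `n` induced by
the orders on the edges. -/
def finLT {n : ℕ} (p q : B.FinPath n) : Prop :=
  ∃ (N : ℕ) (h : N < n), B.elt (p.1 ⟨N, h⟩) (q.1 ⟨N, h⟩) ∧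
    ∀ (i : ℕ) (hi : i < n), N < i → p.1 ⟨i, hi⟩ = q.1 ⟨i, hi⟩

/-- The finite path `p` to level `n` ends at the vertex `v`. -/
def EndsAt {n : ℕ} (p : B.FinPath n) (v : B.V n) : Prop :=
  ∀ (m : ℕ) (h : n = m + 1), B.tgt (p.1 ⟨m, by omega⟩) = B.castV h v

/-- The initial segment of an infinite path, from the root to level `n`. -/
def pathInit (x : B.PathSpace) (n : ℕ) : B.FinPath n :=
  ⟨fun i => x.1 i.val, fun i _ => x.2 i⟩

/-- The vertex of an infinite path at level `n`. -/
def pathVert (x : B.PathSpace) (n : ℕ) : B.V n := B.src (x.1 n)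

theorem pathInit_endsAt (x : B.PathSpace) (n : ℕ) :
    B.EndsAt (B.pathInit x n) (B.pathVert x n) := by
  intro m h
  subst h
  exact x.2 m

/-- Truncation of a finite path to a lower level. -/
def truncTo {n : ℕ} (k : ℕ) (hk : k ≤ n) (p : B.FinPath n) : B.FinPath k :=
  ⟨fun i => p.1 ⟨i.val, by omega⟩, fun i h => p.2 i (by omega)⟩

/-- Paths `x, x'` are `k`-equivalent at level `n`: there is an order isomorphism
between the sets of finite paths from the root into their level-`n` vertices which
preserves truncations to level `k` (equality of `k`-basic blocks) and which matches
the initial segment of `x` with the initial segment of `x'` (the "dot" is in the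
same place). -/
def KEquivAt (k n : ℕ) (x x' : B.PathSpace) : Prop :=
  ∃ φ : { p : B.FinPath n // B.EndsAt p (B.pathVert x n) } ≃
      { p : B.FinPath n // B.EndsAt p (B.pathVert x' n) },
    (∀ p q, B.finLT p.1 q.1 ↔ B.finLT (φ p).1 (φ q).1) ∧
    (∀ p (i : ℕ) (hik : i < k) (hin : i < n), ((φ p).1).1 ⟨i, hin⟩ = (p.1).1 ⟨i, hin⟩) ∧
    φ ⟨B.pathInit x n, B.pathInit_endsAt x n⟩ = ⟨B.pathInit x' n, B.pathInit_endsAt x' n⟩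

/-- Paths are `k`-equivalent: they agree from the root to level `k` and are
`k`-equivalent at every level `n > k`. -/
def KEquivPaths (k : ℕ) (x x' : B.PathSpace) : Prop :=
  (∀ i : ℕ, i < k → x.1 i = x'.1 i) ∧ ∀ n : ℕ, k < n → B.KEquivAt k n x x'

/-- Standard nonexpansive: for every `k ≥ 1` there is a pair of distinct
`k`-equivalent paths. -/
def SNE : Prop := ∀ k : ℕ, 1 ≤ k → ∃ x x' : B.PathSpace, x ≠ x' ∧ B.KEquivPaths k x x'

/-!  ### Telescoping  -/

theorem castV_eq_of_heq {m n : ℕ} (h : m = n) {v : B.V m} {w : B.V n} (hw : HEq v w) :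
    B.castV h v = w := by
  subst h
  exact eq_of_heq hw

theorem castV_heq {m n : ℕ} (h : m = n) (v : B.V m) : HEq (B.castV h v) v := by
  subst h
  rfl

theorem castV_inj {m n : ℕ} (h : m = n) {v w : B.V m}
    (hvw : B.castV h v = B.castV h w) : v = w := by
  subst h
  exact hvw

def castE {m n : ℕ} (h : m = n) (e : B.E m) : B.E n := h ▸ e

noncomputable def chainFrom (a : ℕ) (v : B.V a) : (i : ℕ) → B.E (a + i)
  | 0 => (B.hasOut a v).choose
  | i + 1 => (B.hasOut (a + i + 1) (B.tgt (chainFrom a v i))).choose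

theorem chainFrom_src_zero (a : ℕ) (v : B.V a) : B.src (B.chainFrom a v 0) = v :=
  (B.hasOut a v).choose_spec

theorem chainFrom_src_succ (a : ℕ) (v : B.V a) (i : ℕ) :
    B.src (B.chainFrom a v (i + 1)) = B.tgt (B.chainFrom a v i) :=
  (B.hasOut (a + i + 1) (B.tgt (B.chainFrom a v i))).choose_spec

noncomputable def chainTo (a : ℕ) : (j : ℕ) → (w : B.V (a + j + 1)) → (i : ℕ) → i ≤ j → B.E (a + i)
  | 0, w, i, _ => B.castE (by omega : a + 0 = a + i) (B.hasIn a w).choose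
  | j + 1, w, i, _ =>
      if h : i ≤ j then chainTo a j (B.src (B.hasIn (a + j + 1) w).choose) i h
      else B.castE (by omega : a + (j + 1) = a + i) (B.hasIn (a + j + 1) w).choose

theorem chainTo_tgt_last (a : ℕ) : ∀ (j : ℕ) (w : B.V (a + j + 1)),
    B.tgt (B.chainTo a j w j le_rfl) = w := by
  intro j w
  cases j with
  | zero =>
      simp only [chainTo]
      exact (B.hasIn a w).choose_spec
  | succ j =>
      simp only [chainTo]
      rw [dif_neg (by omega : ¬ j + 1 ≤ j)]
      exact (B.hasIn (a + j + 1) w).choose_spec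

theorem chainTo_chain (a : ℕ) : ∀ (j : ℕ) (w : B.V (a + j + 1)) (i : ℕ) (h : i + 1 ≤ j)
    (h' : i ≤ j), B.tgt (B.chainTo a j w i h') = B.src (B.chainTo a j w (i + 1) h) := by
  intro j
  induction j with
  | zero => intro w i h h'; omega
  | succ j ih =>
      intro w i h h'
      by_cases hij : i + 1 ≤ j
      · simp only [chainTo]
        rw [dif_pos (by omega : i ≤ j), dif_pos hij]
        exact ih _ i hij (by omega)
      · have hi : i = j := by omega
        subst hi
        simp only [chainTo]
        rw [dif_pos (le_refl i), dif_neg (by omega : ¬ i + 1 ≤ i)]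
        exact B.chainTo_tgt_last a i _


def TelE (a b : ℕ) : Type :=
  { f : (i : Fin (b - a)) → B.E (a + i.val) //
    ∀ (i : ℕ) (h : i + 1 < b - a), B.tgt (f ⟨i, by omega⟩) = B.src (f ⟨i + 1, h⟩) }

def telSrc {a b : ℕ} (hab : a < b) (f : B.TelE a b) : B.V a :=
  B.src (f.1 ⟨0, by omega⟩)

def telTgt {a b : ℕ} (hab : a < b) (f : B.TelE a b) : B.V b :=
  B.castV (by omega : a + (b - a - 1) + 1 = b) (B.tgt (f.1 ⟨b - a - 1, by omega⟩))

def telLT {a b : ℕ} (f g : B.TelE a b) : Prop :=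
  ∃ (N : ℕ) (h : N < b - a), B.elt (f.1 ⟨N, h⟩) (g.1 ⟨N, h⟩) ∧
    ∀ (i : ℕ) (hi : i < b - a), N < i → f.1 ⟨i, hi⟩ = g.1 ⟨i, hi⟩

noncomputable def Telescope (ns : ℕ → ℕ) (hmono : StrictMono ns) (h0 : ns 0 = 0) : BDiagram where
  V l := B.V (ns l)
  E l := B.TelE (ns l) (ns (l + 1))
  fintV l := B.fintV (ns l)
  fintE l := by
    classical
    letI : ∀ i : Fin (ns (l + 1) - ns l), Fintype (B.E (ns l + i.val)) := fun i => B.fintE _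
    exact Subtype.fintype _
  nonV l := B.nonV (ns l)
  rootSubsingleton := by show Subsingleton (B.V (ns 0)); rw [h0]; exact B.rootSubsingleton
  src {l} f := B.telSrc (hmono (Nat.lt_succ_self l)) f
  tgt {l} f := B.telTgt (hmono (Nat.lt_succ_self l)) f
  hasOut := by
    intro l v
    refine ⟨⟨fun i => B.chainFrom (ns l) v i.val,
      fun i h => (B.chainFrom_src_succ (ns l) v i).symm⟩, ?_⟩
    exact B.chainFrom_src_zero (ns l) v
  hasIn := by
    intro l w
    have hab : ns l < ns (l + 1) := hmono (Nat.lt_succ_self l)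
    have hj : ns l + (ns (l + 1) - ns l - 1) + 1 = ns (l + 1) := by omega
    refine ⟨⟨fun i => B.chainTo (ns l) (ns (l + 1) - ns l - 1) (B.castV hj.symm w) i.val
        (by omega), fun i h => B.chainTo_chain _ _ _ i (by omega) (by omega)⟩, ?_⟩
    show B.castV (by omega) (B.tgt (B.chainTo (ns l) (ns (l + 1) - ns l - 1)
      (B.castV hj.symm w) (ns (l + 1) - ns l - 1) (by omega))) = w
    rw [B.chainTo_tgt_last]
    exact B.castV_eq_of_heq _ (B.castV_heq _ w)
  elt {l} f g := B.telLT f g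
  elt_tgt := by
    rintro l f g ⟨N, hN, hlt, hgt⟩
    show B.telTgt _ f = B.telTgt _ g
    unfold telTgt
    refine congrArg (B.castV _) ?_
    rcases eq_or_lt_of_le (show N ≤ ns (l + 1) - ns l - 1 by omega) with h | h
    · subst h
      exact B.elt_tgt _ _ _ hlt
    · exact congrArg B.tgt (hgt _ (by omega) h)
  elt_irrefl := by
    rintro l f ⟨N, h, hlt, -⟩
    exact B.elt_irrefl _ _ hlt
  elt_trans := by
    rintro l f g h ⟨N₁, hN₁, hlt₁, hgt₁⟩ ⟨N₂, hN₂, hlt₂, hgt₂⟩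
    rcases lt_trichotomy N₁ N₂ with hc | hc | hc
    · exact ⟨N₂, hN₂, by rw [hgt₁ N₂ hN₂ hc]; exact hlt₂,
        fun i hi hN => (hgt₁ i hi (by omega)).trans (hgt₂ i hi hN)⟩
    · subst hc
      exact ⟨N₁, hN₁, B.elt_trans _ _ _ _ hlt₁ hlt₂,
        fun i hi hN => (hgt₁ i hi hN).trans (hgt₂ i hi hN)⟩
    · refine ⟨N₁, hN₁, ?_, fun i hi hN => (hgt₁ i hi hN).trans (hgt₂ i hi (by omega))⟩
      rw [← hgt₂ N₁ hN₁ hc]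
      exact hlt₁
  elt_total := by
    intro l f g htgt hne
    classical
    have hab : ns l < ns (l + 1) := hmono (Nat.lt_succ_self l)
    set b := ns (l + 1) - ns l with hb
    have hex : ∃ N, ∃ h : N < b, f.1 ⟨N, h⟩ ≠ g.1 ⟨N, h⟩ := by
      by_contra hco
      push_neg at hco
      exact hne (Subtype.ext (funext fun i => hco i.val i.isLt))
    set P : ℕ → Prop := fun N => ∃ h : N < b, f.1 ⟨N, h⟩ ≠ g.1 ⟨N, h⟩ with hP
    obtain ⟨N₀, hN₀⟩ := hex
    set N := Nat.findGreatest P b with hNdef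
    have hPN : P N := Nat.findGreatest_spec (le_of_lt hN₀.choose) hN₀
    have hafter : ∀ i (hi : i < b), N < i → f.1 ⟨i, hi⟩ = g.1 ⟨i, hi⟩ := by
      intro i hi hNi
      by_contra hcon
      exact Nat.findGreatest_is_greatest hNi (le_of_lt hi) ⟨hi, hcon⟩
    clear_value N
    obtain ⟨hNb, hNne⟩ := hPN
    have htgtN : B.tgt (f.1 ⟨N, hNb⟩) = B.tgt (g.1 ⟨N, hNb⟩) := by
      rcases eq_or_lt_of_le (show N ≤ b - 1 by omega) with h | h
      · -- N is the last index; use equality of targets of the composite edges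
        subst h
        exact B.castV_inj _ htgt
      · have h2 : f.1 ⟨N + 1, by omega⟩ = g.1 ⟨N + 1, by omega⟩ :=
          hafter (N + 1) (by omega) (by omega)
        rw [f.2 N (by omega), g.2 N (by omega), h2]
    rcases B.elt_total _ _ _ htgtN hNne with h | h
    · exact Or.inl ⟨N, hNb, h, hafter⟩
    · exact Or.inr ⟨N, hNb, h, fun i hi hN => (hafter i hi hN).symm⟩

def teleMap (ns : ℕ → ℕ) (hmono : StrictMono ns) (h0 : ns 0 = 0) (x : B.PathSpace) :
    (B.Telescope ns hmono h0).PathSpace :=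
  ⟨fun l => ⟨fun i => x.1 (ns l + i.val), fun i _ => x.2 (ns l + i)⟩, fun l => by
    have hab : ns l < ns (l + 1) := hmono (Nat.lt_succ_self l)
    have hm : ns l + (ns (l + 1) - ns l - 1) + 1 = ns (l + 1) := by omega
    show B.castV _ (B.tgt (x.1 (ns l + (ns (l + 1) - ns l - 1)))) = B.src (x.1 (ns (l + 1) + 0))
    rw [x.2 (ns l + (ns (l + 1) - ns l - 1))]
    exact B.castV_eq_of_heq _ (by rw [hm]; exact HEq.rfl)⟩


/-- Level `n+1` is uniformly ordered: there is a single nonempty block `P` of paths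
from the root to level `n` such that the `n`-basic block at every vertex at level
`n+1` is a positive power of `P`. -/
def UniformlyOrderedLevel (n : ℕ) : Prop :=
  ∃ (p : ℕ) (hp : 0 < p) (P : Fin p → B.FinPath n),
    ∀ v : B.V (n + 1), ∃ (m : ℕ), 0 < m ∧
      ∃ enum : Fin (m * p) ≃ { q : B.FinPath (n + 1) // B.EndsAt q v },
        (∀ i j : Fin (m * p), i < j ↔ B.finLT (enum i).1 (enum j).1) ∧
        (∀ i : Fin (m * p),
          B.truncTo n (Nat.le_succ n) (enum i).1 = P ⟨i.val % p, Nat.mod_lt _ hp⟩)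

/-- The ordinal label of an edge: its position in the linear order on the edges
into its target. -/
noncomputable def edgeLabel {n : ℕ} (e : B.E n) : ℕ := Nat.card { e' : B.E n // B.elt e' e }

/-- Deterministic: for every `n ≥ 1`, distinct edges with the same source at level
`n` have different ordinal labels. -/
def Deterministic : Prop :=
  ∀ n : ℕ, 1 ≤ n → ∀ e f : B.E n, B.src e = B.src f → e ≠ f →
    B.edgeLabel e ≠ B.edgeLabel f

end BDiagram

/-- A Bratteli–Vershik system: a simple, properly ordered ordered Bratteli diagram
together with its Vershik map. -/
structure BVSystem where
  B : BDiagram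
  T : B.PathSpace ≃ B.PathSpace
  proper : B.ProperlyOrdered
  simple : B.Simple
  vershik : B.IsVershik T

/-- Conjugacy of systems: an equivariant homeomorphism of the path spaces taking
minimal paths to minimal paths. -/
def Conjugate (S S' : BVSystem) : Prop :=
  ∃ φ : S.B.PathSpace ≃ S'.B.PathSpace,
    (@Continuous _ _ S.B.pathTop S'.B.pathTop φ) ∧
    (@Continuous _ _ S'.B.pathTop S.B.pathTop φ.symm) ∧
    (∀ x, φ (S.T x) = S'.T (φ x)) ∧
    (∀ x, S.B.IsMinPath x → S'.B.IsMinPath (φ x))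

/-- An odometer: a system whose diagram has exactly one vertex at every level. -/
def IsOdometer (S : BVSystem) : Prop := ∀ n, Subsingleton (S.B.V n)

namespace BDiagram

variable (B : BDiagram)

theorem finPath_eq_of_forall {n : ℕ} {p q : B.FinPath n}
    (h : ∀ (i : ℕ) (hi : i < n), p.1 ⟨i, hi⟩ = q.1 ⟨i, hi⟩) : p = q :=
  Subtype.ext (funext fun i => h i.1 i.2)

theorem finLT_irrefl' {n : ℕ} (p : B.FinPath n) : ¬ B.finLT p p := by
  rintro ⟨N, h, hlt, -⟩
  exact B.elt_irrefl _ _ hlt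

theorem finLT_trans' {n : ℕ} (p q r : B.FinPath n)
    (h1 : B.finLT p q) (h2 : B.finLT q r) : B.finLT p r := by
  obtain ⟨N₁, hN₁, hlt₁, hgt₁⟩ := h1
  obtain ⟨N₂, hN₂, hlt₂, hgt₂⟩ := h2
  rcases lt_trichotomy N₁ N₂ with hc | hc | hc
  · exact ⟨N₂, hN₂, by rw [hgt₁ N₂ hN₂ hc]; exact hlt₂,
      fun i hi hN => (hgt₁ i hi (by omega)).trans (hgt₂ i hi hN)⟩
  · subst hc
    exact ⟨N₁, hN₁, B.elt_trans _ _ _ _ hlt₁ hlt₂,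
      fun i hi hN => (hgt₁ i hi hN).trans (hgt₂ i hi hN)⟩
  · refine ⟨N₁, hN₁, ?_, fun i hi hN => (hgt₁ i hi hN).trans (hgt₂ i hi (by omega))⟩
    rw [← hgt₂ N₁ hN₁ hc]
    exact hlt₁

theorem finLT_total' {n : ℕ} {v : B.V n} (p q : B.FinPath n)
    (hp : B.EndsAt p v) (hq : B.EndsAt q v) (hne : p ≠ q) :
    B.finLT p q ∨ B.finLT q p := by
  classical
  have hex : ∃ N, ∃ h : N < n, p.1 ⟨N, h⟩ ≠ q.1 ⟨N, h⟩ := by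
    by_contra hco
    push_neg at hco
    exact hne (B.finPath_eq_of_forall fun i hi => hco i hi)
  set P : ℕ → Prop := fun N => ∃ h : N < n, p.1 ⟨N, h⟩ ≠ q.1 ⟨N, h⟩ with hP
  obtain ⟨N₀, hN₀⟩ := hex
  set N := Nat.findGreatest P n with hNdef
  have hPN : P N := Nat.findGreatest_spec (le_of_lt hN₀.choose) hN₀
  have hafter : ∀ i (hi : i < n), N < i → p.1 ⟨i, hi⟩ = q.1 ⟨i, hi⟩ := by
    intro i hi hNi
    by_contra hcon
    exact Nat.findGreatest_is_greatest hNi (le_of_lt hi) ⟨hi, hcon⟩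
  clear_value N
  obtain ⟨hNb, hNne⟩ := hPN
  have htgtN : B.tgt (p.1 ⟨N, hNb⟩) = B.tgt (q.1 ⟨N, hNb⟩) := by
    rcases eq_or_lt_of_le (show N + 1 ≤ n by omega) with h | h
    · have hm : n = N + 1 := h.symm
      rw [hp N hm, hq N hm]
    · have h2 : p.1 ⟨N + 1, by omega⟩ = q.1 ⟨N + 1, by omega⟩ :=
        hafter (N + 1) (by omega) (by omega)
      rw [p.2 N (by omega), q.2 N (by omega), h2]
  rcases B.elt_total _ _ _ htgtN hNne with h | h
  · exact Or.inl ⟨N, hNb, h, hafter⟩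
  · exact Or.inr ⟨N, hNb, h, fun i hi hN => (hafter i hi hN).symm⟩

/-- An order-preserving bijection between the (finite, linearly ordered) sets of
finite paths into two vertices is unique. -/
theorem orderIso_unique {n : ℕ} {v w : B.V n}
    (φ ψ : {p : B.FinPath n // B.EndsAt p v} ≃ {p : B.FinPath n // B.EndsAt p w})
    (hφ : ∀ p q, B.finLT p.1 q.1 ↔ B.finLT (φ p).1 (φ q).1)
    (hψ : ∀ p q, B.finLT p.1 q.1 ↔ B.finLT (ψ p).1 (ψ q).1) : φ = ψ := by
  classical
  haveI : ∀ i : Fin n, Finite (B.E i.1) := fun i => @Finite.of_fintype _ (B.fintE i.1)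
  haveI hfp : Finite (B.FinPath n) := Subtype.finite
  haveI hfw : Finite {p : B.FinPath n // B.EndsAt p w} := Subtype.finite
  set rk : {p : B.FinPath n // B.EndsAt p w} → ℕ :=
    fun b => Nat.card {d : {p : B.FinPath n // B.EndsAt p w} // B.finLT d.1 b.1} with hrk
  have hrk_lt : ∀ a b : {p : B.FinPath n // B.EndsAt p w},
      B.finLT a.1 b.1 → rk a < rk b := by
    intro a b hab
    have hss : {d : {p : B.FinPath n // B.EndsAt p w} | B.finLT d.1 a.1} ⊂
        {d : {p : B.FinPath n // B.EndsAt p w} | B.finLT d.1 b.1} := by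
      constructor
      · intro d hd
        exact B.finLT_trans' _ _ _ hd hab
      · intro hsub
        exact B.finLT_irrefl' a.1 (hsub hab)
    have hlt := Set.ncard_lt_ncard hss (Set.toFinite _)
    rw [← Nat.card_coe_set_eq, ← Nat.card_coe_set_eq] at hlt
    exact hlt
  have hrk_inj : Function.Injective rk := by
    intro a b hab
    by_contra hne
    have hne' : a.1 ≠ b.1 := fun h => hne (Subtype.ext h)
    rcases B.finLT_total' a.1 b.1 a.2 b.2 hne' with h | h
    · exact absurd hab (Nat.ne_of_lt (hrk_lt a b h))
    · exact absurd hab.symm (Nat.ne_of_lt (hrk_lt b a h))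
  have hrank : ∀ (χ : {p : B.FinPath n // B.EndsAt p v} ≃ {p : B.FinPath n // B.EndsAt p w})
      (hχ : ∀ p q, B.finLT p.1 q.1 ↔ B.finLT (χ p).1 (χ q).1)
      (a : {p : B.FinPath n // B.EndsAt p v}),
      rk (χ a) = Nat.card {d : {p : B.FinPath n // B.EndsAt p v} // B.finLT d.1 a.1} := by
    intro χ hχ a
    exact (Nat.card_congr (Equiv.subtypeEquiv χ fun d => hχ d a)).symm
  refine Equiv.ext fun a => ?_
  exact hrk_inj (((hrank φ hφ a).trans (hrank ψ hψ a).symm))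

/-- Transport of a fiber along an equality of vertices. -/
def fibCast {n : ℕ} {v w : B.V n} (h : v = w) :
    {p : B.FinPath n // B.EndsAt p v} ≃ {p : B.FinPath n // B.EndsAt p w} :=
  Equiv.subtypeEquivRight (fun p => by rw [h])

theorem fibCast_val {n : ℕ} {v w : B.V n} (h : v = w)
    (p : {p : B.FinPath n // B.EndsAt p v}) : ((B.fibCast h) p).1 = p.1 := rfl

/-- Core rigidity: if some order isomorphism of fibers preserves truncation to
level `k'`, then every order isomorphism of those fibers does. -/
theorem core_rigid {n k' : ℕ} {v w : B.V n}
    (φ ψ : {p : B.FinPath n // B.EndsAt p v} ≃ {p : B.FinPath n // B.EndsAt p w})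
    (hφ : ∀ p q, B.finLT p.1 q.1 ↔ B.finLT (φ p).1 (φ q).1)
    (hψ : ∀ p q, B.finLT p.1 q.1 ↔ B.finLT (ψ p).1 (ψ q).1)
    (hψtr : ∀ p (i : ℕ) (hik : i < k') (hin : i < n),
      ((ψ p).1).1 ⟨i, hin⟩ = (p.1).1 ⟨i, hin⟩) :
    ∀ p (i : ℕ) (hik : i < k') (hin : i < n),
      ((φ p).1).1 ⟨i, hin⟩ = (p.1).1 ⟨i, hin⟩ := by
  have h := B.orderIso_unique φ ψ hφ hψ
  subst h
  exact hψtr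

end BDiagram

/-- Every standard nonexpansive simple, properly ordered
Bratteli–Vershik system has unbounded width: for every `R` some level has more
than `R` vertices. -/
theorem sne_unbounded_width
    (B : BDiagram) (T : B.PathSpace ≃ B.PathSpace)
    (hproper : B.ProperlyOrdered) (hsimple : B.Simple) (hT : B.IsVershik T)
    (hsne : B.SNE) :
    ∀ R : ℕ, ∃ n : ℕ, R < Nat.card (B.V n) := by
  intro R
  classical
  choose x x' hne heq using hsne
  have hdiff : ∀ (k : ℕ) (hk : 1 ≤ k), ∃ m : ℕ, (x k hk).1 m ≠ (x' k hk).1 m := by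
    intro k hk
    by_contra hco
    push_neg at hco
    exact hne k hk (Subtype.ext (funext hco))
  let d : ∀ (k : ℕ), 1 ≤ k → ℕ := fun k hk => (hdiff k hk).choose
  have hd : ∀ (k : ℕ) (hk : 1 ≤ k), (x k hk).1 (d k hk) ≠ (x' k hk).1 (d k hk) :=
    fun k hk => (hdiff k hk).choose_spec
  have hd_ge : ∀ (k : ℕ) (hk : 1 ≤ k), k ≤ d k hk := by
    intro k hk
    by_contra hlt
    push_neg at hlt
    exact hd k hk ((heq k hk).1 _ hlt)
  let K : ℕ → {k : ℕ // 1 ≤ k} := fun j =>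
    Nat.rec ⟨1, le_refl 1⟩ (fun _ prev => ⟨d prev.1 prev.2 + 1, by omega⟩) j
  have hKsucc : ∀ j : ℕ, (K (j + 1)).1 = d (K j).1 (K j).2 + 1 := fun j => rfl
  have hKmono : Monotone fun j => (K j).1 := by
    apply monotone_nat_of_le_succ
    intro j
    have h1 := hd_ge (K j).1 (K j).2
    have h2 := hKsucc j
    omega
  set J := R * R with hJ
  set n := d (K J).1 (K J).2 + 1 with hn
  have hdlt : ∀ j : ℕ, j ≤ J → d (K j).1 (K j).2 < n := by
    intro j hj
    rcases eq_or_lt_of_le hj with h | hlt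
    · subst h; omega
    · have h1 : (K (j + 1)).1 ≤ (K J).1 := hKmono hlt
      have h2 : (K J).1 ≤ d (K J).1 (K J).2 := hd_ge _ _
      have h3 := hKsucc j
      omega
  have hkn : ∀ j : ℕ, j ≤ J → (K j).1 < n := fun j hj =>
    lt_of_le_of_lt (hd_ge (K j).1 (K j).2) (hdlt j hj)
  have key : ∀ (j j' : ℕ), j' ≤ J → j < j' →
      B.pathVert (x (K j).1 (K j).2) n = B.pathVert (x (K j').1 (K j').2) n →
      B.pathVert (x' (K j).1 (K j).2) n = B.pathVert (x' (K j').1 (K j').2) n → False := by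
    intro j j' hj'J hjj' hA hA'
    have hj : j ≤ J := by omega
    obtain ⟨φ, hφord, hφtr, hφdot⟩ := (heq (K j).1 (K j).2).2 n (hkn j hj)
    obtain ⟨ψ₀, hψord, hψtr, hψdot⟩ := (heq (K j').1 (K j').2).2 n (hkn j' hj'J)
    let ψ : {p : B.FinPath n // B.EndsAt p (B.pathVert (x (K j).1 (K j).2) n)} ≃
        {p : B.FinPath n // B.EndsAt p (B.pathVert (x' (K j).1 (K j).2) n)} :=
      ((B.fibCast hA).trans ψ₀).trans (B.fibCast hA'.symm)
    have hψord' : ∀ p q, B.finLT p.1 q.1 ↔ B.finLT (ψ p).1 (ψ q).1 :=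
      fun p q => hψord (B.fibCast hA p) (B.fibCast hA q)
    have hψtr' : ∀ p (i : ℕ) (hik : i < (K j').1) (hin : i < n),
        ((ψ p).1).1 ⟨i, hin⟩ = (p.1).1 ⟨i, hin⟩ :=
      fun p i hik hin => hψtr (B.fibCast hA p) i hik hin
    have hcore := B.core_rigid φ ψ hφord hψord' hψtr'
    have hi1 : d (K j).1 (K j).2 < (K j').1 := by
      have h1 : (K (j + 1)).1 ≤ (K j').1 := hKmono hjj'
      have h2 := hKsucc j
      omega
    have hfin := hcore ⟨B.pathInit (x (K j).1 (K j).2) n,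
      B.pathInit_endsAt (x (K j).1 (K j).2) n⟩ (d (K j).1 (K j).2) hi1 (hdlt j hj)
    rw [hφdot] at hfin
    exact hd (K j).1 (K j).2 hfin.symm
  refine ⟨n, ?_⟩
  by_contra hc
  push_neg at hc
  letI : Fintype (B.V n) := B.fintV n
  have hcR : Fintype.card (B.V n) ≤ R := by
    rw [← Nat.card_eq_fintype_card]
    exact hc
  let F : Fin (J + 1) → B.V n × B.V n := fun j =>
    (B.pathVert (x (K j.1).1 (K j.1).2) n, B.pathVert (x' (K j.1).1 (K j.1).2) n)
  have hinj : Function.Injective F := by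
    intro j j' hFeq
    have h1 := congrArg Prod.fst hFeq
    have h2 := congrArg Prod.snd hFeq
    simp only [F] at h1 h2
    rcases lt_trichotomy j.1 j'.1 with hlt | heqv | hgt
    · exact absurd (key j.1 j'.1 (by omega) hlt h1 h2) (fun h => h)
    · exact Fin.ext heqv
    · exact absurd (key j'.1 j.1 (by omega) hgt h1.symm h2.symm) (fun h => h)
  have hcard := Fintype.card_le_of_injective F hinj
  rw [Fintype.card_fin, Fintype.card_prod] at hcard
  have hmul : Fintype.card (B.V n) * Fintype.card (B.V n) ≤ R * R :=
    Nat.mul_le_mul hcR hcR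
  omega
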